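/- For every integer d ≥ 3, the hypercube Q_d satisfies dim(Q_d) − 1 ≤ edim(Q_d) ≤ dim(Q_d) = mdim(Q_d). -/

import Mathlib

/-- Distance from a vertex `s` to an edge `e` (as an element of `Sym2 V`):
the minimum of the distances from `s` to the two endpoints of `e`. -/
noncomputable def edgeDist {V : Type*} (G : SimpleGraph V) (e : Sym2 V) (s : V) : ℕ :=
  Sym2.lift ⟨fun x y => min (G.dist x s) (G.dist y s), fun _ _ => min_comm _ _⟩ e

/-- `S` is a metric generator for `G`: every pair of distinct vertices is
distinguished by some element of `S`. -/
def IsMetricGen {V : Type*} (G : SimpleGraph V) (S : Set V) : Prop :=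
  ∀ u v : V, u ≠ v → ∃ s ∈ S, G.dist s u ≠ G.dist s v

/-- `S` is an edge metric generator for `G`: every pair of distinct edges is
distinguished by some element of `S`. -/
def IsEdgeMetricGen {V : Type*} (G : SimpleGraph V) (S : Set V) : Prop :=
  ∀ e₁ ∈ G.edgeSet, ∀ e₂ ∈ G.edgeSet, e₁ ≠ e₂ → ∃ s ∈ S, edgeDist G e₁ s ≠ edgeDist G e₂ s

/-- Distance from a vertex `s` to a mixed element (a vertex or an edge). -/
noncomputable def mixedDist {V : Type*} (G : SimpleGraph V) (a : V ⊕ Sym2 V) (s : V) : ℕ :=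
  Sum.elim (fun w => G.dist s w) (fun e => edgeDist G e s) a

/-- A mixed element is valid if it is a vertex, or an actual edge of `G`. -/
def IsMixedElem {V : Type*} (G : SimpleGraph V) (a : V ⊕ Sym2 V) : Prop :=
  Sum.elim (fun _ => True) (fun e => e ∈ G.edgeSet) a

/-- `S` is a mixed metric generator for `G`: every pair of distinct elements of
`V(G) ∪ E(G)` is distinguished by some element of `S`. -/
def IsMixedMetricGen {V : Type*} (G : SimpleGraph V) (S : Set V) : Prop :=
  ∀ a b : V ⊕ Sym2 V, IsMixedElem G a → IsMixedElem G b → a ≠ b →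
    ∃ s ∈ S, mixedDist G a s ≠ mixedDist G b s

/-- The metric dimension: minimum cardinality of a metric generator. -/
noncomputable def metricDim {V : Type*} [Fintype V] (G : SimpleGraph V) : ℕ :=
  sInf {n | ∃ S : Finset V, S.card = n ∧ IsMetricGen G ↑S}

/-- The edge metric dimension: minimum cardinality of an edge metric generator. -/
noncomputable def edgeMetricDim {V : Type*} [Fintype V] (G : SimpleGraph V) : ℕ :=
  sInf {n | ∃ S : Finset V, S.card = n ∧ IsEdgeMetricGen G ↑S}

/-- The mixed metric dimension: minimum cardinality of a mixed metric generator. -/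
noncomputable def mixedMetricDim {V : Type*} [Fintype V] (G : SimpleGraph V) : ℕ :=
  sInf {n | ∃ S : Finset V, S.card = n ∧ IsMixedMetricGen G ↑S}

/-- The hypercube `Q_d`: vertices are binary vectors of length `d`, with two
vertices adjacent iff they differ in exactly one coordinate. -/
def cube (d : ℕ) : SimpleGraph (Fin d → Bool) where
  Adj u v := hammingDist u v = 1
  symm := ⟨fun u v h => (hammingDist_comm v u).trans h⟩
  loopless := ⟨fun u h => absurd ((hammingDist_self u).symm.trans h) zero_ne_one⟩

namespace Stmt18

open Finset

variable {d : ℕ}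

/-- flip coordinate `i` -/
def fl (i : Fin d) (x : Fin d → Bool) : Fin d → Bool := Function.update x i (!x i)

lemma fl_self (i : Fin d) (x : Fin d → Bool) : fl i x i = !x i := Function.update_self _ _ _

lemma fl_ne {i j : Fin d} (x : Fin d → Bool) (h : j ≠ i) : fl i x j = x j :=
  Function.update_of_ne h _ _

lemma bool_self_ne_not (a : Bool) : a ≠ !a := by cases a <;> simp

lemma bool_ne_iff {a b : Bool} : a ≠ b ↔ a = !b := by cases a <;> cases b <;> simp

lemma hd_def (x y : Fin d → Bool) :
    hammingDist x y = (Finset.univ.filter (fun j => x j ≠ y j)).card := rfl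

lemma adj_fl (i : Fin d) (x : Fin d → Bool) : (cube d).Adj x (fl i x) := by
  show hammingDist x (fl i x) = 1
  rw [hd_def]
  rw [Finset.card_eq_one]
  refine ⟨i, ?_⟩
  ext j
  simp only [Finset.mem_filter, Finset.mem_univ, true_and, Finset.mem_singleton]
  constructor
  · intro hj
    by_contra hne
    exact hj (fl_ne x hne).symm
  · intro hj
    rw [hj, fl_self]
    exact bool_self_ne_not _

lemma adj_iff {x y : Fin d → Bool} : (cube d).Adj x y ↔ ∃ i, y = fl i x := by
  constructor
  · intro h
    have h' : (Finset.univ.filter (fun j => x j ≠ y j)).card = 1 := h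
    rw [Finset.card_eq_one] at h'
    obtain ⟨i, hi⟩ := h'
    refine ⟨i, funext fun j => ?_⟩
    by_cases hj : j = i
    · subst hj
      have : j ∈ Finset.univ.filter (fun j => x j ≠ y j) := by rw [hi]; simp
      simp only [Finset.mem_filter] at this
      rw [fl_self]
      exact (bool_ne_iff.mp this.2.symm)
    · have : j ∉ Finset.univ.filter (fun j => x j ≠ y j) := by rw [hi]; simpa using hj
      simp only [Finset.mem_filter, Finset.mem_univ, true_and, not_not] at this
      rw [fl_ne x hj, this]
  · rintro ⟨i, rfl⟩
    exact adj_fl i x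

lemma exists_walk (u v : Fin d → Bool) :
    ∃ p : (cube d).Walk u v, p.length = hammingDist u v := by
  generalize hn : hammingDist u v = n
  induction n generalizing u v with
  | zero =>
    obtain rfl : u = v := hammingDist_eq_zero.mp hn
    exact ⟨SimpleGraph.Walk.nil, rfl⟩
  | succ n ih =>
    have hne : (Finset.univ.filter (fun j => u j ≠ v j)).Nonempty := by
      rw [← Finset.card_pos, ← hd_def, hn]; omega
    obtain ⟨i, hi⟩ := hne
    simp only [Finset.mem_filter, Finset.mem_univ, true_and] at hi
    set u' := Function.update u i (v i) with hu'
    have hadj : (cube d).Adj u u' := by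
      have : u' = fl i u := by
        rw [hu']
        unfold fl
        rw [bool_ne_iff.mp hi, Bool.not_not]
      rw [this]; exact adj_fl i u
    have hless : hammingDist u' v = n := by
      have : Finset.univ.filter (fun j => u' j ≠ v j)
          = (Finset.univ.filter (fun j => u j ≠ v j)).erase i := by
        ext j
        simp only [Finset.mem_filter, Finset.mem_univ, true_and, Finset.mem_erase]
        by_cases hj : j = i
        · subst hj; simp [hu', Function.update_self]
        · simp [hu', Function.update_of_ne hj, hj]
      rw [hd_def, this, Finset.card_erase_of_mem (by simp [hi]), ← hd_def, hn]
      omega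
    obtain ⟨p, hp⟩ := ih u' v hless
    exact ⟨SimpleGraph.Walk.cons hadj p, by
      rw [SimpleGraph.Walk.length_cons, hp]⟩

lemma walk_ge {u v : Fin d → Bool} (p : (cube d).Walk u v) :
    hammingDist u v ≤ p.length := by
  induction p with
  | nil => simp
  | @cons a b c h p ih =>
    have h1 : hammingDist a c ≤ hammingDist a b + hammingDist b c := hammingDist_triangle _ _ _
    have h2 : hammingDist a b = 1 := h
    simp only [SimpleGraph.Walk.length_cons]
    omega

lemma cube_dist (u v : Fin d → Bool) : (cube d).dist u v = hammingDist u v := by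
  obtain ⟨p, hp⟩ := exists_walk u v
  refine le_antisymm (hp ▸ SimpleGraph.dist_le p) ?_
  obtain ⟨q, hq⟩ := SimpleGraph.Reachable.exists_walk_length_eq_dist ⟨p⟩
  rw [← hq]
  exact walk_ge q

def O (i : Fin d) (s x : Fin d → Bool) : ℕ :=
  ((Finset.univ.erase i).filter (fun j => s j ≠ x j)).card

lemma hd_split (i : Fin d) (s x : Fin d → Bool) :
    hammingDist s x = O i s x + (if s i = x i then 0 else 1) := by
  rw [hd_def, show (Finset.univ : Finset (Fin d)) = insert i (Finset.univ.erase i) from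
    (Finset.insert_erase (Finset.mem_univ i)).symm, Finset.filter_insert]
  by_cases hsi : s i = x i
  · rw [if_neg (by simp [hsi]), if_pos hsi]
    rfl
  · rw [if_pos hsi, if_neg hsi, Finset.card_insert_of_notMem (by simp)]
    rfl

lemma O_congr {i : Fin d} (s : Fin d → Bool) {x y : Fin d → Bool}
    (h : ∀ j, j ≠ i → x j = y j) : O i s x = O i s y := by
  unfold O
  congr 1
  apply Finset.filter_congr
  intro j hj
  rw [h j (Finset.ne_of_mem_erase hj)]

lemma edgeDist_mk (x y s : Fin d → Bool) :
    edgeDist (cube d) s(x, y) s = min ((cube d).dist x s) ((cube d).dist y s) := rfl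

lemma O_fl (i : Fin d) (s x : Fin d → Bool) : O i s (fl i x) = O i s x :=
  O_congr s (fun j hj => fl_ne x hj)

lemma edgeDist_fl (i : Fin d) (x s : Fin d → Bool) :
    edgeDist (cube d) s(x, fl i x) s = O i s x := by
  rw [edgeDist_mk, cube_dist, cube_dist, hammingDist_comm x s, hammingDist_comm (fl i x) s,
      hd_split i s x, hd_split i s (fl i x), O_fl, fl_self]
  by_cases hsx : s i = x i
  · rw [if_pos hsx, if_neg (by rw [hsx]; exact bool_self_ne_not _)]
    omega
  · rw [if_neg hsx, if_pos (bool_ne_iff.mp hsx)]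
    omega

lemma hd_parity (s u v : Fin d → Bool) :
    ∃ m, hammingDist s u + hammingDist s v = hammingDist u v + 2 * m := by
  set A := Finset.univ.filter (fun j => s j ≠ u j) with hA
  set B := Finset.univ.filter (fun j => s j ≠ v j) with hB
  set C := Finset.univ.filter (fun j => u j ≠ v j) with hC
  have hset : C ∪ (A ∩ B) = A ∪ B := by
    ext j
    simp only [hA, hB, hC, Finset.mem_union, Finset.mem_inter, Finset.mem_filter,
      Finset.mem_univ, true_and]
    cases hs : s j <;> cases hu : u j <;> cases hv : v j <;> simp
  have hdis : Disjoint C (A ∩ B) := by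
    rw [Finset.disjoint_left]
    intro j hj hj2
    simp only [hA, hB, hC, Finset.mem_inter, Finset.mem_filter, Finset.mem_univ, true_and] at hj hj2
    obtain ⟨h1, h2⟩ := hj2
    cases hs : s j <;> cases hu : u j <;> cases hv : v j <;> simp_all
  refine ⟨(A ∩ B).card, ?_⟩
  have h1 := Finset.card_union_add_card_inter A B
  have h2 := Finset.card_union_of_disjoint hdis
  rw [hset] at h2
  have e1 : hammingDist s u = A.card := hd_def s u
  have e2 : hammingDist s v = B.card := hd_def s v
  have e3 : hammingDist u v = C.card := hd_def u v
  omega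

lemma hd_compl {u v : Fin d → Bool} (h : ∀ j, v j = !u j) (s : Fin d → Bool) :
    hammingDist s u + hammingDist s v = d := by
  rw [hd_def, hd_def]
  have hf : Finset.univ.filter (fun j => s j ≠ v j)
      = Finset.univ.filter (fun j => ¬ (s j ≠ u j)) := by
    apply Finset.filter_congr
    intro j _
    rw [h j]
    cases s j <;> cases u j <;> simp
  rw [hf, Finset.card_filter_add_card_filter_not, Finset.card_univ, Fintype.card_fin]

def flK (K : Finset (Fin d)) (x : Fin d → Bool) : Fin d → Bool :=
  fun j => if j ∈ K then !x j else x j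

lemma flK_mem {K : Finset (Fin d)} {j : Fin d} (h : j ∈ K) (x : Fin d → Bool) :
    flK K x j = !x j := if_pos h

lemma flK_not_mem {K : Finset (Fin d)} {j : Fin d} (h : j ∉ K) (x : Fin d → Bool) :
    flK K x j = x j := if_neg h

lemma flK_ne {K : Finset (Fin d)} {i : Fin d} (hi : i ∈ K) (x : Fin d → Bool) :
    flK K x ≠ x := by
  intro h
  have h2 := congrFun h i
  rw [flK_mem hi] at h2
  exact bool_self_ne_not _ h2.symm

lemma hd_splitK (K : Finset (Fin d)) (s x : Fin d → Bool) :
    hammingDist s x = (K.filter fun j => s j ≠ x j).card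
      + ((Finset.univ \ K).filter fun j => s j ≠ x j).card := by
  rw [hd_def, ← Finset.card_union_of_disjoint
      (Finset.disjoint_filter_filter Finset.disjoint_sdiff),
    ← Finset.filter_union, Finset.union_sdiff_of_subset (Finset.subset_univ K)]

lemma hd_flK (K : Finset (Fin d)) (s x : Fin d → Bool) :
    hammingDist s (flK K x) + (K.filter fun j => s j ≠ x j).card
      = hammingDist s x + (K.filter fun j => s j = x j).card := by
  rw [hd_splitK K s x, hd_splitK K s (flK K x)]
  have h1 : ((Finset.univ \ K).filter fun j => s j ≠ flK K x j)
      = ((Finset.univ \ K).filter fun j => s j ≠ x j) := by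
    apply Finset.filter_congr
    intro j hj
    simp only [Finset.mem_sdiff] at hj
    rw [flK_not_mem hj.2]
  have h2 : (K.filter fun j => s j ≠ flK K x j) = (K.filter fun j => s j = x j) := by
    apply Finset.filter_congr
    intro j hj
    rw [flK_mem hj]
    cases s j <;> cases x j <;> simp
  rw [h1, h2]
  omega

lemma flK_dist (K : Finset (Fin d)) (s x : Fin d → Bool)
    (h : 2 * (K.filter fun j => s j ≠ x j).card = K.card) :
    hammingDist s (flK K x) = hammingDist s x := by
  have h1 := hd_flK K s x
  have h2 : (K.filter fun j => s j ≠ x j).card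
      + (K.filter fun j => ¬ (s j ≠ x j)).card = K.card :=
    Finset.card_filter_add_card_filter_not _
  have h3 : (K.filter fun j => ¬ (s j ≠ x j)) = (K.filter fun j => s j = x j) := by
    apply Finset.filter_congr
    intro j _
    rw [not_ne_iff]
  rw [h3] at h2
  omega

lemma card_filter_pair {k l : Fin d} (h : k ≠ l) (p : Fin d → Prop) [DecidablePred p] :
    (({k, l} : Finset (Fin d)).filter p).card
      = (if p k then 1 else 0) + (if p l then 1 else 0) := by
  rw [Finset.card_filter, Finset.sum_insert (by simp [h]), Finset.sum_singleton]

lemma card_pair {k l : Fin d} (h : k ≠ l) : ({k, l} : Finset (Fin d)).card = 2 := by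
  rw [Finset.card_insert_of_notMem (by simp [h]), Finset.card_singleton]

lemma card_filter_quad {a b c e : Fin d} (hab : a ≠ b) (hac : a ≠ c) (hae : a ≠ e)
    (hbc : b ≠ c) (hbe : b ≠ e) (hce : c ≠ e) (p : Fin d → Prop) [DecidablePred p] :
    (({a, b, c, e} : Finset (Fin d)).filter p).card
      = (if p a then 1 else 0) + (if p b then 1 else 0)
        + (if p c then 1 else 0) + (if p e then 1 else 0) := by
  rw [Finset.card_filter, Finset.sum_insert (by simp [hab, hac, hae]),
    Finset.sum_insert (by simp [hbc, hbe]), Finset.sum_insert (by simp [hce]),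
    Finset.sum_singleton]
  omega

lemma card_quad {a b c e : Fin d} (hab : a ≠ b) (hac : a ≠ c) (hae : a ≠ e)
    (hbc : b ≠ c) (hbe : b ≠ e) (hce : c ≠ e) :
    ({a, b, c, e} : Finset (Fin d)).card = 4 := by
  rw [Finset.card_insert_of_notMem (by simp [hab, hac, hae]),
    Finset.card_insert_of_notMem (by simp [hbc, hbe]),
    Finset.card_insert_of_notMem (by simp [hce]), Finset.card_singleton]

lemma fl_invol (i : Fin d) (x : Fin d → Bool) : fl i (fl i x) = x := by
  funext k
  by_cases hk : k = i
  · subst hk; rw [fl_self, fl_self, Bool.not_not]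
  · rw [fl_ne _ hk, fl_ne _ hk]

lemma isMetricGen_iff (S : Set (Fin d → Bool)) :
    IsMetricGen (cube d) S ↔
      ∀ u v : Fin d → Bool, u ≠ v → ∃ s ∈ S, hammingDist s u ≠ hammingDist s v := by
  unfold IsMetricGen
  simp only [cube_dist]

lemma edge_rep {e : Sym2 (Fin d → Bool)} (he : e ∈ (cube d).edgeSet) :
    ∃ x i, e = s(x, fl i x) := by
  induction e with
  | _ x y =>
    rw [SimpleGraph.mem_edgeSet] at he
    obtain ⟨i, rfl⟩ := adj_iff.mp he
    exact ⟨x, i, rfl⟩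

lemma metricGen_edges {S : Finset (Fin d → Bool)}
    (hS : IsMetricGen (cube d) ↑S) {e₁ e₂ : Sym2 (Fin d → Bool)}
    (h₁ : e₁ ∈ (cube d).edgeSet) (h₂ : e₂ ∈ (cube d).edgeSet) (hne : e₁ ≠ e₂) :
    ∃ s ∈ S, edgeDist (cube d) e₁ s ≠ edgeDist (cube d) e₂ s := by
  rw [isMetricGen_iff] at hS
  obtain ⟨x, i, rfl⟩ := edge_rep h₁
  obtain ⟨z, j, rfl⟩ := edge_rep h₂
  by_contra hcon
  push_neg at hcon
  have hO : ∀ s ∈ S, O i s x = O j s z := by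
    intro s hs
    have h := hcon s hs
    rwa [edgeDist_fl, edgeDist_fl] at h
  by_cases hij : i = j
  · subst hij
    set v := Function.update z i (x i) with hv
    have huv : x ≠ v := by
      intro h
      apply hne
      have hzx : ∀ k, k ≠ i → z k = x k := by
        intro k hk
        rw [h, hv, Function.update_of_ne hk]
      by_cases hzi : z i = x i
      · have hzx2 : z = x := by
          funext k
          by_cases hk : k = i
          · rw [hk]; exact hzi
          · exact hzx k hk
        rw [hzx2]
      · have hz : z = fl i x := by
          funext k
          by_cases hk : k = i
          · rw [hk, fl_self]; exact bool_ne_iff.mp hzi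
          · rw [fl_ne _ hk]; exact hzx k hk
        rw [hz, fl_invol, Sym2.eq_swap]
    obtain ⟨s, hs, hd2⟩ := hS x v huv
    apply hd2
    rw [hd_split i s x, hd_split i s v]
    have hOv : O i s v = O i s x := by
      rw [(O_congr s (fun k hk => (Function.update_of_ne hk _ _ : v k = z k)) : O i s v = O i s z)]
      exact (hO s hs).symm
    have hvi : v i = x i := Function.update_self _ _ _
    rw [hOv, hvi]
  · -- i ≠ j
    set c₂ : ℕ := if x j = z j then 0 else 1 with hc₂
    set κ : ℕ := (hammingDist x z + c₂) % 2 with hκ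
    have hpar : ∀ s ∈ S,
        ((if s i = x i then (0:ℕ) else 1) + (if s j = x j then (0:ℕ) else 1)) % 2 = κ := by
      intro s hs
      have h0 := hO s hs
      have hsx := hd_split i s x
      have hsxj := hd_split j s x
      have hsz := hd_split j s z
      obtain ⟨m, hm⟩ := hd_parity s x z
      set α := (if s i = x i then (0:ℕ) else 1) with hα
      set β := (if s j = x j then (0:ℕ) else 1) with hβ
      set γ := (if s j = z j then (0:ℕ) else 1) with hγ
      have hα1 : α ≤ 1 := by rw [hα]; split <;> omega
      have hβ1 : β ≤ 1 := by rw [hβ]; split <;> omega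
      have hγ1 : γ ≤ 1 := by rw [hγ]; split <;> omega
      have hc21 : c₂ ≤ 1 := by rw [hc₂]; split <;> omega
      have hβγ : (β + γ) % 2 = c₂ % 2 := by
        rw [hβ, hγ, hc₂]
        cases hb1 : s j <;> cases hb2 : x j <;> cases hb3 : z j <;>
          simp [hb1, hb2, hb3]
      omega
    -- choose u
    have main : ∀ u : Fin d → Bool,
        (∀ s ∈ S, ((if s i = u i then (0:ℕ) else 1) + (if s j = u j then (0:ℕ) else 1)) % 2 = 1)
        → False := by
      intro u hsum
      have hiK : i ∈ ({i, j} : Finset (Fin d)) := by simp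
      have hne2 : flK {i, j} u ≠ u := flK_ne hiK u
      obtain ⟨s, hs, hd2⟩ := hS u (flK {i, j} u) (Ne.symm hne2)
      apply hd2
      have hval := hsum s hs
      have hfil : 2 * (({i, j} : Finset (Fin d)).filter fun k => s k ≠ u k).card
          = ({i, j} : Finset (Fin d)).card := by
        rw [card_filter_pair hij, card_pair hij]
        by_cases e1 : s i = u i <;> by_cases e2 : s j = u j <;>
          simp only [e1, e2, if_pos, if_neg, ne_eq, not_true_eq_false, not_false_eq_true,
            if_true, if_false] at hval ⊢ <;> omega
      exact (flK_dist _ s u hfil).symm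
    by_cases hκ1 : κ = 1
    · apply main x
      intro s hs
      have h := hpar s hs
      rw [hκ1] at h
      exact h
    · have hκ0 : κ = 0 := by rw [hκ] at hκ1 ⊢; omega
      apply main (fl i x)
      intro s hs
      have h := hpar s hs
      rw [hκ0] at h
      have h1 : (if s i = fl i x i then (0:ℕ) else 1) = 1 - (if s i = x i then (0:ℕ) else 1) := by
        rw [fl_self]
        by_cases e1 : s i = x i
        · rw [if_pos e1, if_neg (by rw [e1]; exact bool_self_ne_not _)]
        · rw [if_neg e1, if_pos (bool_ne_iff.mp e1)]
      have h2 : (if s j = fl i x j then (0:ℕ) else 1) = (if s j = x j then (0:ℕ) else 1) := by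
        rw [fl_ne x (Ne.symm hij)]
      rw [h1, h2]
      have hb : (if s i = x i then (0:ℕ) else 1) ≤ 1 := by split <;> omega
      omega

lemma ind_sum_one {p q r : Bool} (h : p ≠ q) :
    (if p = r then (0:ℕ) else 1) + (if q = r then (0:ℕ) else 1) = 1 := by
  cases p <;> cases q <;> cases r <;> simp_all

lemma flip2_kill {S : Finset (Fin d → Bool)} (hS : IsMetricGen (cube d) ↑S)
    {k l : Fin d} (hkl : k ≠ l) (u : Fin d → Bool)
    (hsum : ∀ s ∈ S, (if s k = u k then (0:ℕ) else 1) + (if s l = u l then (0:ℕ) else 1) = 1) :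
    False := by
  have hiK : k ∈ ({k, l} : Finset (Fin d)) := by simp
  obtain ⟨s, hs, hd2⟩ := hS u (flK {k, l} u) (Ne.symm (flK_ne hiK u))
  apply hd2
  rw [cube_dist, cube_dist]
  refine (flK_dist _ s u ?_).symm
  rw [card_filter_pair hkl, card_pair hkl]
  have hval := hsum s hs
  by_cases e1 : s k = u k <;> by_cases e2 : s l = u l <;>
    simp only [e1, e2, if_pos, if_neg, ne_eq, not_true_eq_false, not_false_eq_true,
      if_true, if_false] at hval ⊢ <;> omega

lemma flip4_kill {S : Finset (Fin d → Bool)} (hS : IsMetricGen (cube d) ↑S)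
    {a b c e : Fin d} (hab : a ≠ b) (hac : a ≠ c) (hae : a ≠ e) (hbc : b ≠ c)
    (hbe : b ≠ e) (hce : c ≠ e) (u : Fin d → Bool)
    (hsum : ∀ s ∈ S, (if s a = u a then (0:ℕ) else 1) + (if s b = u b then (0:ℕ) else 1)
      + (if s c = u c then (0:ℕ) else 1) + (if s e = u e then (0:ℕ) else 1) = 2) : False := by
  have hiK : a ∈ ({a, b, c, e} : Finset (Fin d)) := by simp
  obtain ⟨s, hs, hd2⟩ := hS u (flK {a, b, c, e} u) (Ne.symm (flK_ne hiK u))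
  apply hd2
  rw [cube_dist, cube_dist]
  refine (flK_dist _ s u ?_).symm
  rw [card_filter_quad hab hac hae hbc hbe hce, card_quad hab hac hae hbc hbe hce]
  have hval := hsum s hs
  by_cases e1 : s a = u a <;> by_cases e2 : s b = u b <;> by_cases e3 : s c = u c <;>
    by_cases e4 : s e = u e <;>
    simp only [e1, e2, e3, e4, if_pos, if_neg, ne_eq, not_true_eq_false, not_false_eq_true,
      if_true, if_false] at hval ⊢ <;> omega

lemma mixed_of_balanced {S : Finset (Fin d → Bool)}
    (hS : IsMetricGen (cube d) ↑S)
    (hbal : ∀ j : Fin d, ∃ s ∈ S, ∃ t ∈ S, s j ≠ t j) :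
    IsMixedMetricGen (cube d) ↑S := by
  have hve : ∀ (w : Fin d → Bool) (e : Sym2 (Fin d → Bool)), e ∈ (cube d).edgeSet →
      ∃ s ∈ S, (cube d).dist s w ≠ edgeDist (cube d) e s := by
    intro w e he
    obtain ⟨x, i, rfl⟩ := edge_rep he
    by_contra hcon
    push_neg at hcon
    obtain ⟨s, hsS, t, htS, hst⟩ := hbal i
    have hsw : hammingDist s w = O i s x := by
      have h := hcon s hsS; rwa [cube_dist, edgeDist_fl] at h
    have htw : hammingDist t w = O i t x := by
      have h := hcon t htS; rwa [cube_dist, edgeDist_fl] at h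
    have hsx := hd_split i s x
    have htx := hd_split i t x
    obtain ⟨m1, hm1⟩ := hd_parity w s t
    obtain ⟨m2, hm2⟩ := hd_parity x s t
    rw [hammingDist_comm w s, hammingDist_comm w t] at hm1
    rw [hammingDist_comm x s, hammingDist_comm x t] at hm2
    have hind := ind_sum_one (r := x i) hst
    omega
  intro a b ha hb hab
  rcases a with u | e₁
  · rcases b with v | e₂
    · have hne : u ≠ v := fun h => hab (by rw [h])
      obtain ⟨s, hs, hd2⟩ := hS u v hne
      exact ⟨s, hs, by simpa [mixedDist] using hd2⟩
    · have he : e₂ ∈ (cube d).edgeSet := hb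
      obtain ⟨s, hs, hd2⟩ := hve u e₂ he
      exact ⟨s, hs, by simpa [mixedDist] using hd2⟩
  · rcases b with v | e₂
    · have he : e₁ ∈ (cube d).edgeSet := ha
      obtain ⟨s, hs, hd2⟩ := hve v e₁ he
      exact ⟨s, hs, by simpa [mixedDist] using hd2.symm⟩
    · have hne : e₁ ≠ e₂ := fun h => hab (by rw [h])
      obtain ⟨s, hs, hd2⟩ := metricGen_edges hS ha hb hne
      exact ⟨s, hs, by simpa [mixedDist] using hd2⟩

lemma gen_three {S : Finset (Fin d → Bool)} (hd3 : 3 ≤ d) (hS : IsMetricGen (cube d) ↑S) :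
    ∃ s0 ∈ S, ∃ s1 ∈ S, ∃ s2 ∈ S, s0 ≠ s1 ∧ s0 ≠ s2 ∧ s1 ≠ s2 := by
  have h01 : (⟨0, by omega⟩ : Fin d) ≠ ⟨1, by omega⟩ := by simp [Fin.ext_iff]
  have h02 : (⟨0, by omega⟩ : Fin d) ≠ ⟨2, by omega⟩ := by simp [Fin.ext_iff]
  have h12 : (⟨1, by omega⟩ : Fin d) ≠ ⟨2, by omega⟩ := by simp [Fin.ext_iff]
  set i0 : Fin d := ⟨0, by omega⟩
  set i1 : Fin d := ⟨1, by omega⟩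
  set i2 : Fin d := ⟨2, by omega⟩
  rcases Nat.lt_or_ge 2 S.card with h | h
  · rw [Finset.two_lt_card_iff] at h
    obtain ⟨a, b, c, ha, hb, hc, hab, hac, hbc⟩ := h
    exact ⟨a, ha, b, hb, c, hc, hab, hac, hbc⟩
  exfalso
  rcases Nat.lt_or_ge 1 S.card with h1 | h1
  · -- exactly two elements
    obtain ⟨a, ha, b, hb, hab⟩ := Finset.one_lt_card.mp h1
    have hSab : ∀ s ∈ S, s = a ∨ s = b := by
      intro s hs
      by_contra hcon2
      push_neg at hcon2
      have := Finset.two_lt_card_iff.mpr ⟨s, a, b, hs, ha, hb, hcon2.1, hcon2.2, hab⟩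
      omega
    have key : ∀ (k l : Fin d), k ≠ l → ((a k = b k) ↔ (a l = b l)) → False := by
      intro k l hkl hiff
      set u : Fin d → Bool := fun j => if j = k then a k else if j = l then !(a l) else false
        with hu
      have huk : u k = a k := by simp [hu]
      have hul : u l = !(a l) := by simp [hu, Ne.symm hkl]
      apply flip2_kill hS hkl u
      intro s hs
      rw [huk, hul]
      rcases hSab s hs with rfl | rfl
      · rw [if_pos rfl, if_neg (by exact bool_self_ne_not _)]
      · cases hb1 : a k <;> cases hb2 : s k <;> cases hb3 : a l <;> cases hb4 : s l <;>
          simp_all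
    by_cases hb01 : (a i0 = b i0) ↔ (a i1 = b i1)
    · exact key i0 i1 h01 hb01
    by_cases hb02 : (a i0 = b i0) ↔ (a i2 = b i2)
    · exact key i0 i2 h02 hb02
    exact key i1 i2 h12 (by tauto)
  rcases Nat.lt_or_ge 0 S.card with h0 | h0
  · -- exactly one element
    obtain ⟨a, ha⟩ := Finset.card_pos.mp h0
    have hSa : ∀ s ∈ S, s = a := by
      intro s hs
      by_contra hne
      have := Finset.one_lt_card.mpr ⟨s, hs, a, ha, hne⟩
      omega
    set u : Fin d → Bool := fun j => if j = i0 then a i0 else if j = i1 then !(a i1) else false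
      with hu
    have huk : u i0 = a i0 := by simp [hu]
    have hul : u i1 = !(a i1) := by simp [hu, Ne.symm h01]
    apply flip2_kill hS h01 u
    intro s hs
    rw [hSa s hs, huk, hul, if_pos rfl, if_neg (by exact bool_self_ne_not _)]
  · -- empty
    have hS0 : S = ∅ := Finset.card_eq_zero.mp (by omega)
    obtain ⟨s, hs, _⟩ := hS (fun _ => false) (fun _ => true)
      (by intro h; exact absurd (congrFun h i0) (by simp))
    rw [hS0] at hs
    simp at hs

lemma bool_not_ne_self (a : Bool) : (!a) ≠ a := by cases a <;> simp

lemma exists_eta {S : Finset (Fin d → Bool)} (hd3 : 3 ≤ d) (hS : IsMetricGen (cube d) ↑S) :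
    ∃ η : (Fin d → Bool) → Bool, ∀ j : Fin d, ∃ s ∈ S, ∃ t ∈ S,
      (if η s then !(s j) else s j) ≠ (if η t then !(t j) else t j) := by
  by_contra hcon
  push_neg at hcon
  obtain ⟨s0, hs0, s1, hs1, s2, hs2, h01, h02, h12⟩ := gen_three hd3 hS
  obtain ⟨j1, hj1⟩ := hcon (fun _ => false)
  simp only [Bool.false_eq_true, if_false] at hj1
  obtain ⟨j2, hj2⟩ := hcon (fun s => decide (s = s0))
  simp only [decide_eq_true_eq] at hj2
  obtain ⟨j3, hj3⟩ := hcon (fun s => decide (s = s1))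
  simp only [decide_eq_true_eq] at hj3
  obtain ⟨j4, hj4⟩ := hcon (fun s => decide (s = s0) || decide (s = s1))
  simp only [Bool.or_eq_true, decide_eq_true_eq] at hj4
  set β := s0 j1 with hβ
  set κ2 := s1 j2 with hκ2
  set κ3 := s0 j3 with hκ3
  set κ4 := s2 j4 with hκ4
  have A1 : ∀ s ∈ S, s j1 = β := fun s hs => hj1 s hs s0 hs0
  have A2a : ∀ s ∈ S, s ≠ s0 → s j2 = κ2 := by
    intro s hs hne
    have h := hj2 s hs s1 hs1
    rwa [if_neg hne, if_neg (Ne.symm h01)] at h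
  have A2b : s0 j2 = !κ2 := by
    have h := hj2 s0 hs0 s1 hs1
    rw [if_pos rfl, if_neg (Ne.symm h01)] at h
    rw [hκ2, ← h, Bool.not_not]
  have A3a : ∀ s ∈ S, s ≠ s1 → s j3 = κ3 := by
    intro s hs hne
    have h := hj3 s hs s0 hs0
    rwa [if_neg hne, if_neg h01] at h
  have A3b : s1 j3 = !κ3 := by
    have h := hj3 s1 hs1 s0 hs0
    rw [if_pos rfl, if_neg h01] at h
    rw [hκ3, ← h, Bool.not_not]
  have hs2ne : ¬(s2 = s0 ∨ s2 = s1) := by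
    rintro (h | h)
    · exact h02 h.symm
    · exact h12 h.symm
  have A4a : ∀ s ∈ S, s ≠ s0 → s ≠ s1 → s j4 = κ4 := by
    intro s hs hne0 hne1
    have h := hj4 s hs s2 hs2
    rwa [if_neg (by rintro (h' | h') <;> [exact hne0 h'; exact hne1 h']), if_neg hs2ne] at h
  have A4b : s0 j4 = !κ4 := by
    have h := hj4 s0 hs0 s2 hs2
    rw [if_pos (Or.inl rfl), if_neg hs2ne] at h
    rw [hκ4, ← h, Bool.not_not]
  have A4c : s1 j4 = !κ4 := by
    have h := hj4 s1 hs1 s2 hs2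
    rw [if_pos (Or.inr rfl), if_neg hs2ne] at h
    rw [hκ4, ← h, Bool.not_not]
  -- distinctness of the four coordinates
  have hd12 : j1 ≠ j2 := by
    intro he
    have e1 : s0 j2 = !κ2 := A2b
    have e2 : s1 j2 = κ2 := A2a s1 hs1 (Ne.symm h01)
    have e3 : s0 j1 = β := A1 s0 hs0
    have e4 : s1 j1 = β := A1 s1 hs1
    rw [he] at e3 e4
    have hfin : (!κ2) = κ2 := by rw [← e1, e3, ← e4] <;> exact e2
    exact bool_not_ne_self _ hfin
  have hd13 : j1 ≠ j3 := by
    intro he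
    have e1 : s1 j3 = !κ3 := A3b
    have e2 : s0 j3 = κ3 := A3a s0 hs0 h01
    have e3 : s0 j1 = β := A1 s0 hs0
    have e4 : s1 j1 = β := A1 s1 hs1
    rw [he] at e3 e4
    have hfin : (!κ3) = κ3 := by rw [← e1, e4, ← e3] <;> exact e2
    exact bool_not_ne_self _ hfin
  have hd14 : j1 ≠ j4 := by
    intro he
    have e1 : s0 j4 = !κ4 := A4b
    have e2 : s2 j4 = κ4 := A4a s2 hs2 (Ne.symm h02) (Ne.symm h12)
    have e3 : s0 j1 = β := A1 s0 hs0
    have e4 : s2 j1 = β := A1 s2 hs2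
    rw [he] at e3 e4
    have hfin : (!κ4) = κ4 := by rw [← e1, e3, ← e4] <;> exact e2
    exact bool_not_ne_self _ hfin
  have hd23 : j2 ≠ j3 := by
    intro he
    have e1 : s1 j3 = !κ3 := A3b
    have e2 : s1 j2 = κ2 := A2a s1 hs1 (Ne.symm h01)
    have e3 : s2 j2 = κ2 := A2a s2 hs2 (Ne.symm h02)
    have e4 : s2 j3 = κ3 := A3a s2 hs2 (Ne.symm h12)
    rw [he] at e2 e3
    have hfin : (!κ3) = κ3 := by rw [← e1, e2, ← e3] <;> exact e4
    exact bool_not_ne_self _ hfin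
  have hd24 : j2 ≠ j4 := by
    intro he
    have e1 : s1 j4 = !κ4 := A4c
    have e2 : s1 j2 = κ2 := A2a s1 hs1 (Ne.symm h01)
    have e3 : s2 j2 = κ2 := A2a s2 hs2 (Ne.symm h02)
    rw [he] at e2 e3
    have hfin : (!κ4) = κ4 := by rw [← e1, e2, ← e3, ← hκ4]
    exact bool_not_ne_self _ hfin
  have hd34 : j3 ≠ j4 := by
    intro he
    have e1 : s0 j4 = !κ4 := A4b
    have e2 : s0 j3 = κ3 := A3a s0 hs0 h01
    have e3 : s2 j3 = κ3 := A3a s2 hs2 (Ne.symm h12)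
    rw [he] at e2 e3
    have hfin : (!κ4) = κ4 := by rw [← e1, e2, ← e3, ← hκ4]
    exact bool_not_ne_self _ hfin
  -- the killing vertex
  set u : Fin d → Bool := fun j =>
    if j = j1 then β else if j = j2 then !κ2 else if j = j3 then !κ3
      else if j = j4 then κ4 else false with hu
  have hu1 : u j1 = β := by simp [hu]
  have hu2 : u j2 = !κ2 := by simp [hu, Ne.symm hd12]
  have hu3 : u j3 = !κ3 := by simp [hu, Ne.symm hd13, Ne.symm hd23]
  have hu4 : u j4 = κ4 := by simp [hu, Ne.symm hd14, Ne.symm hd24, Ne.symm hd34]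
  apply flip4_kill hS hd12 hd13 hd14 hd23 hd24 hd34 u
  intro s hs
  rw [hu1, hu2, hu3, hu4, if_pos (A1 s hs)]
  by_cases he0 : s = s0
  · subst he0
    rw [if_pos A2b, if_neg (by rw [A3a s hs h01]; exact bool_self_ne_not _),
      if_neg (by rw [A4b]; exact bool_not_ne_self _)]
  by_cases he1 : s = s1
  · subst he1
    rw [if_neg (by rw [hκ2]; exact bool_self_ne_not _), if_pos A3b,
      if_neg (by rw [A4c]; exact bool_not_ne_self _)]
  · rw [if_neg (by rw [A2a s hs he0]; exact bool_self_ne_not _),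
      if_neg (by rw [A3a s hs he1]; exact bool_self_ne_not _),
      if_pos (A4a s hs he0 he1)]

def comp (s : Fin d → Bool) : Fin d → Bool := fun j => !(s j)

lemma hd_comp (s u : Fin d → Bool) : hammingDist (comp s) u + hammingDist s u = d := by
  have h := hd_compl (u := s) (v := comp s) (fun j => rfl) u
  rw [hammingDist_comm u s, hammingDist_comm u (comp s)] at h
  omega

lemma balance {S : Finset (Fin d → Bool)} (hd3 : 3 ≤ d) (hS : IsMetricGen (cube d) ↑S) :
    ∃ S' : Finset (Fin d → Bool), S'.card ≤ S.card ∧ IsMetricGen (cube d) ↑S' ∧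
      ∀ j : Fin d, ∃ s ∈ S', ∃ t ∈ S', s j ≠ t j := by
  obtain ⟨η, hη⟩ := exists_eta hd3 hS
  set g : (Fin d → Bool) → (Fin d → Bool) := fun s => if η s then comp s else s with hg
  have hgj : ∀ s j, g s j = (if η s then !(s j) else s j) := by
    intro s j
    rw [hg]
    by_cases hηs : η s <;> simp [hηs, comp]
  refine ⟨S.image g, Finset.card_image_le, ?_, ?_⟩
  · rw [isMetricGen_iff]
    intro u v huv
    obtain ⟨s, hs, hd2⟩ := (isMetricGen_iff _).mp hS u v huv
    refine ⟨g s, Finset.mem_coe.mpr (Finset.mem_image_of_mem g hs), ?_⟩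
    by_cases hηs : η s
    · rw [hg]
      simp only [hηs, if_true]
      intro heq
      apply hd2
      have c1 := hd_comp s u
      have c2 := hd_comp s v
      omega
    · rw [hg]
      simp only [hηs, if_false]
      exact hd2
  · intro j
    obtain ⟨s, hs, t, ht, hst⟩ := hη j
    exact ⟨g s, Finset.mem_image_of_mem g hs, g t, Finset.mem_image_of_mem g ht,
      by rw [hgj, hgj]; exact hst⟩

lemma O_comm (i : Fin d) (s x : Fin d → Bool) : O i s x = O i x s := by
  unfold O
  congr 1
  apply Finset.filter_congr
  intro j _
  exact ne_comm

lemma mem_coe_of_mem {S : Finset (Fin d → Bool)} {s : Fin d → Bool} (h : s ∈ S) :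
    s ∈ (↑S : Set (Fin d → Bool)) := Finset.mem_coe.mpr h

lemma edge_to_metric {S : Finset (Fin d → Bool)} (hd3 : 3 ≤ d)
    (hE : IsEdgeMetricGen (cube d) ↑S) {s₀ : Fin d → Bool} (hs₀ : s₀ ∈ S) :
    IsMetricGen (cube d) ↑(insert (fl (⟨0, by omega⟩ : Fin d) s₀) S) := by
  set i0 : Fin d := ⟨0, by omega⟩ with hi0
  set w := fl i0 s₀ with hw
  rw [isMetricGen_iff]
  intro u v huv
  by_contra hcon
  push_neg at hcon
  have hS' : ∀ s ∈ S, hammingDist s u = hammingDist s v := by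
    intro s hs
    exact hcon s (by simp [hs])
  have hw' : hammingDist w u = hammingDist w v := hcon w (by simp)
  have hall : ∀ i, u i ≠ v i := by
    intro i hi
    have he1 : s(u, fl i u) ∈ (cube d).edgeSet := (SimpleGraph.mem_edgeSet _).mpr (adj_fl i u)
    have he2 : s(v, fl i v) ∈ (cube d).edgeSet := (SimpleGraph.mem_edgeSet _).mpr (adj_fl i v)
    have hne : s(u, fl i u) ≠ s(v, fl i v) := by
      intro heq
      rw [Sym2.eq_iff] at heq
      rcases heq with ⟨h1, -⟩ | ⟨h1, -⟩
      · exact huv h1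
      · have h2 := congrFun h1 i
        rw [fl_self, hi] at h2
        exact bool_self_ne_not _ h2
    obtain ⟨s, hs, hd2⟩ := hE _ he1 _ he2 hne
    apply hd2
    rw [edgeDist_fl, edgeDist_fl]
    have h1 := hd_split i s u
    have h2 := hd_split i s v
    have h3 := hS' s hs
    rw [hi] at h1
    omega
  have hcompl : ∀ j, v j = !(u j) := fun j => bool_ne_iff.mp (Ne.symm (hall j))
  have hc1 := hd_compl hcompl s₀
  have hc2 := hd_compl hcompl w
  have h3 := hS' s₀ hs₀
  have hsp1 := hd_split i0 s₀ u
  have hsp2 := hd_split i0 w u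
  have hO1 : O i0 w u = O i0 s₀ u := by
    rw [O_comm i0 w u, O_comm i0 s₀ u]
    exact O_congr u (fun j hj => fl_ne s₀ hj)
  have hind : (if w i0 = u i0 then (0:ℕ) else 1) + (if s₀ i0 = u i0 then (0:ℕ) else 1) = 1 := by
    rw [hw, fl_self]
    exact ind_sum_one (bool_not_ne_self _)
  omega

lemma univ_metricGen : IsMetricGen (cube d) ↑(Finset.univ : Finset (Fin d → Bool)) := by
  rw [isMetricGen_iff]
  intro u v huv
  refine ⟨u, by simp, ?_⟩
  rw [hammingDist_self]
  exact fun h => huv (hammingDist_eq_zero.mp h.symm)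

lemma univ_balanced : ∀ j : Fin d, ∃ s ∈ (Finset.univ : Finset (Fin d → Bool)),
    ∃ t ∈ (Finset.univ : Finset (Fin d → Bool)), s j ≠ t j :=
  fun _ => ⟨(fun _ => false), by simp, (fun _ => true), by simp, by simp⟩

lemma mixed_to_metric {S : Set (Fin d → Bool)} (h : IsMixedMetricGen (cube d) S) :
    IsMetricGen (cube d) S := by
  intro u v huv
  obtain ⟨s, hs, hd2⟩ := h (Sum.inl u) (Sum.inl v) trivial trivial (by simp [huv])
  exact ⟨s, hs, by simpa [mixedDist] using hd2⟩

lemma edgeGen_nonempty {S : Finset (Fin d → Bool)} (hd3 : 3 ≤ d)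
    (hE : IsEdgeMetricGen (cube d) ↑S) : ∃ s₀, s₀ ∈ S := by
  have h01 : (⟨0, by omega⟩ : Fin d) ≠ ⟨1, by omega⟩ := by simp [Fin.ext_iff]
  set i0 : Fin d := ⟨0, by omega⟩
  set i1 : Fin d := ⟨1, by omega⟩
  set x : Fin d → Bool := fun _ => false with hx
  have he1 : s(x, fl i0 x) ∈ (cube d).edgeSet := (SimpleGraph.mem_edgeSet _).mpr (adj_fl i0 x)
  have he2 : s(x, fl i1 x) ∈ (cube d).edgeSet := (SimpleGraph.mem_edgeSet _).mpr (adj_fl i1 x)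
  have hne : s(x, fl i0 x) ≠ s(x, fl i1 x) := by
    intro heq
    rw [Sym2.eq_iff] at heq
    rcases heq with ⟨-, h2⟩ | ⟨h1, -⟩
    · have h3 := congrFun h2 i0
      rw [fl_self, fl_ne x h01] at h3
      exact bool_not_ne_self _ h3
    · have h3 := congrFun h1 i1
      rw [fl_self] at h3
      exact bool_self_ne_not _ h3
  obtain ⟨s, hs, -⟩ := hE _ he1 _ he2 hne
  exact ⟨s, hs⟩

lemma isEdgeGen_of_isMetricGen {S : Finset (Fin d → Bool)}
    (hS : IsMetricGen (cube d) ↑S) : IsEdgeMetricGen (cube d) ↑S := by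
  intro e₁ he₁ e₂ he₂ hne
  obtain ⟨s, hs, h⟩ := metricGen_edges hS he₁ he₂ hne
  exact ⟨s, mem_coe_of_mem hs, h⟩

end Stmt18

/-- For every `d ≥ 3`,
`dim(Q_d) - 1 ≤ edim(Q_d) ≤ dim(Q_d) = mdim(Q_d)`. -/
theorem stmt18 (d : ℕ) (hd : 3 ≤ d) :
    metricDim (cube d) - 1 ≤ edgeMetricDim (cube d) ∧
      edgeMetricDim (cube d) ≤ metricDim (cube d) ∧
      metricDim (cube d) = mixedMetricDim (cube d) := by
  have hMne : {n | ∃ S : Finset (Fin d → Bool), S.card = n ∧ IsMetricGen (cube d) ↑S}.Nonempty :=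
    ⟨_, Finset.univ, rfl, Stmt18.univ_metricGen⟩
  have hM : metricDim (cube d) ∈
      {n | ∃ S : Finset (Fin d → Bool), S.card = n ∧ IsMetricGen (cube d) ↑S} :=
    Nat.sInf_mem hMne
  obtain ⟨SM, hSMcard, hSMgen⟩ := hM
  have hb : edgeMetricDim (cube d) ≤ metricDim (cube d) :=
    Nat.sInf_le ⟨SM, hSMcard, Stmt18.isEdgeGen_of_isMetricGen hSMgen⟩
  have hEne : {n | ∃ S : Finset (Fin d → Bool), S.card = n ∧ IsEdgeMetricGen (cube d) ↑S}.Nonempty :=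
    ⟨_, Finset.univ, rfl, Stmt18.isEdgeGen_of_isMetricGen Stmt18.univ_metricGen⟩
  have hE : edgeMetricDim (cube d) ∈
      {n | ∃ S : Finset (Fin d → Bool), S.card = n ∧ IsEdgeMetricGen (cube d) ↑S} :=
    Nat.sInf_mem hEne
  obtain ⟨SE, hSEcard, hSEgen⟩ := hE
  obtain ⟨s₀, hs₀⟩ := Stmt18.edgeGen_nonempty hd hSEgen
  have ha : metricDim (cube d) ≤ edgeMetricDim (cube d) + 1 := by
    have hgen := Stmt18.edge_to_metric hd hSEgen hs₀
    have hle : metricDim (cube d) ≤ (insert (Stmt18.fl (⟨0, by omega⟩ : Fin d) s₀) SE).card :=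
      Nat.sInf_le ⟨_, rfl, hgen⟩
    have hcard := Finset.card_insert_le (Stmt18.fl (⟨0, by omega⟩ : Fin d) s₀) SE
    omega
  have hXne : {n | ∃ S : Finset (Fin d → Bool), S.card = n ∧ IsMixedMetricGen (cube d) ↑S}.Nonempty :=
    ⟨_, Finset.univ, rfl, Stmt18.mixed_of_balanced Stmt18.univ_metricGen Stmt18.univ_balanced⟩
  have hX : mixedMetricDim (cube d) ∈
      {n | ∃ S : Finset (Fin d → Bool), S.card = n ∧ IsMixedMetricGen (cube d) ↑S} :=
    Nat.sInf_mem hXne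
  obtain ⟨SX, hSXcard, hSXgen⟩ := hX
  have hc1 : metricDim (cube d) ≤ mixedMetricDim (cube d) :=
    Nat.sInf_le ⟨SX, hSXcard, Stmt18.mixed_to_metric hSXgen⟩
  have hc2 : mixedMetricDim (cube d) ≤ metricDim (cube d) := by
    obtain ⟨S', hle, hg', hbal⟩ := Stmt18.balance hd hSMgen
    have hle2 : mixedMetricDim (cube d) ≤ S'.card :=
      Nat.sInf_le ⟨S', rfl, Stmt18.mixed_of_balanced hg' hbal⟩
    omega
  exact ⟨by omega, hb, le_antisymm hc1 hc2⟩
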